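/- Let K be a convex body in ℝ^n, let f_1, f_2 be two nonzero linear functionals on ℝ^n, and suppose K is covered by finitely many planks P_1, …, P_m, where each P_i = {x ∈ ℝ^n : c_i ≤ f_{j(i)}(x) ≤ d_i} with j(i) ∈ {1, 2} and c_i ≤ d_i. Then Σ_{i=1}^{m} (d_i − c_i) / ( max_{x ∈ K} f_{j(i)}(x) − min_{x ∈ K} f_{j(i)}(x) ) ≥ 1. In other words, the Bang conjecture holds when the normals of the covering planks have only two distinct directions: the sum of the widths of the planks in the norm with unit ball K + (−K) is at least 1. -/

import Mathlib

open MeasureTheory Set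
open scoped ENNReal

set_option linter.unusedVariables false


noncomputable def bangP (α β γ : ℝ) : ℝ := γ*β + (1-γ)*α

noncomputable def bangRho (α β γ : ℝ) : ℝ := α*β / bangP α β γ

lemma bangP_nonneg {α β γ : ℝ} (hα : 0 ≤ α) (hβ : 0 ≤ β) (hγ0 : 0 ≤ γ) (hγ1 : γ ≤ 1) :
    0 ≤ bangP α β γ := by
  unfold bangP; nlinarith

lemma bangP_pos {α β γ : ℝ} (hα : 0 < α) (hβ : 0 < β) (hγ0 : 0 ≤ γ) (hγ1 : γ ≤ 1) :
    0 < bangP α β γ := by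
  rcases le_total α β with h | h
  · unfold bangP; nlinarith [mul_le_mul_of_nonneg_left h hγ0]
  · unfold bangP; nlinarith [mul_le_mul_of_nonneg_left h (by linarith : (0:ℝ) ≤ 1 - γ)]

lemma bangRho_nonneg {α β γ : ℝ} (hα : 0 ≤ α) (hβ : 0 ≤ β) (hγ0 : 0 ≤ γ) (hγ1 : γ ≤ 1) :
    0 ≤ bangRho α β γ :=
  div_nonneg (by nlinarith) (bangP_nonneg hα hβ hγ0 hγ1)

lemma bangP_eq_zero {α β γ : ℝ} (hα : 0 ≤ α) (hβ : 0 ≤ β) (hγ0 : 0 ≤ γ) (hγ1 : γ ≤ 1)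
    (h : bangP α β γ = 0) : α * β = 0 := by
  unfold bangP at h
  rcases mul_eq_zero.mp (by nlinarith : γ * β = 0) with h1 | h1
  · rcases mul_eq_zero.mp (by nlinarith : (1-γ) * α = 0) with h2 | h2
    · nlinarith
    · simp [h2]
  · simp [h1]

lemma bangRho_mul {α β γ : ℝ} (hα : 0 ≤ α) (hβ : 0 ≤ β) (hγ0 : 0 ≤ γ) (hγ1 : γ ≤ 1) :
    bangRho α β γ * bangP α β γ = α * β := by
  rcases eq_or_ne (bangP α β γ) 0 with h | h
  · rw [h, mul_zero, bangP_eq_zero hα hβ hγ0 hγ1 h]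
  · rw [bangRho, div_mul_cancel₀ _ h]

lemma bangRho_le_one {α β γ : ℝ} (hα0 : 0 ≤ α) (hα1 : α ≤ 1) (hβ0 : 0 ≤ β) (hβ1 : β ≤ 1)
    (hγ0 : 0 ≤ γ) (hγ1 : γ ≤ 1) : bangRho α β γ ≤ 1 := by
  rcases eq_or_lt_of_le (bangP_nonneg hα0 hβ0 hγ0 hγ1) with h | h
  · rw [bangRho, ← h, div_zero]; norm_num
  · rw [bangRho, div_le_one h, bangP]
    nlinarith [mul_nonneg hγ0 (by nlinarith : 0 ≤ β - α*β),
      mul_nonneg (by linarith : (0:ℝ) ≤ 1-γ) (by nlinarith : 0 ≤ α - α*β)]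

lemma bangRho_self {α γ : ℝ} (hα : 0 ≤ α) : bangRho α α γ = α := by
  rcases eq_or_lt_of_le hα with h | h
  · rw [bangRho, ← h, mul_zero, zero_div]
  · rw [bangRho, bangP]
    rw [show γ * α + (1-γ)*α = α by ring, mul_div_assoc, div_self h.ne', mul_one]

/-- outer region identity -/
lemma bang_R1 {α β γ : ℝ} (hα : 0 < α) (hβ : 0 < β) (hγ0 : 0 ≤ γ) (hγ1 : γ ≤ 1) :
    γ * bangRho α β γ / α + (1-γ) * bangRho α β γ / β = 1 := by
  have hP : 0 < bangP α β γ := bangP_pos hα hβ hγ0 hγ1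
  have h := bangRho_mul (le_of_lt hα) (le_of_lt hβ) hγ0 hγ1
  rw [bangP] at h
  field_simp
  linear_combination h

noncomputable def bangT (α β γ δ : ℝ) : ℝ := 1 - bangRho α β γ - bangRho (1-α) (1-β) δ
noncomputable def bangF (α β γ δ : ℝ) : ℝ := β*γ*(1-δ) - α*δ*(1-γ) - α*β*(γ-δ)
/-- middle region identity -/
lemma bang_R2 {α β γ δ : ℝ} (hα0 : 0 ≤ α) (hβ1 : β ≤ 1) (hαβ : α < β)
    (hγ0 : 0 ≤ γ) (hγ1 : γ ≤ 1) (hδ0 : 0 ≤ δ) (hδ1 : δ ≤ 1) :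
    (1-γ) * bangRho α β γ / β + δ * bangRho (1-α) (1-β) δ / (1-α)
      + bangT α β γ δ / (β-α) = 1 := by
  have hβ : 0 < β := lt_of_le_of_lt hα0 hαβ
  have hα1 : 0 < 1 - α := by linarith
  have hρ := bangRho_mul hα0 (le_of_lt hβ) hγ0 hγ1
  have hρ' := bangRho_mul (by linarith : (0:ℝ) ≤ 1-α) (by linarith : (0:ℝ) ≤ 1-β) hδ0 hδ1
  rw [bangP] at hρ hρ'
  rw [bangT]
  have hba : β - α ≠ 0 := by linarith
  field_simp
  ring_nf
  nlinarith [hρ, hρ']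

/-- t nonneg given sign condition -/
lemma bangT_nonneg {α β γ δ : ℝ} (hα0 : 0 ≤ α) (hα1 : α ≤ 1) (hβ0 : 0 ≤ β) (hβ1 : β ≤ 1)
    (hγ0 : 0 ≤ γ) (hγ1 : γ ≤ 1) (hδ0 : 0 ≤ δ) (hδ1 : δ ≤ 1)
    (hE : 0 ≤ (β - α) * bangF α β γ δ) : 0 ≤ bangT α β γ δ := by
  have h1α : (0:ℝ) ≤ 1 - α := by linarith
  have h1β : (0:ℝ) ≤ 1 - β := by linarith
  rcases eq_or_lt_of_le (bangP_nonneg hα0 hβ0 hγ0 hγ1) with hP | hP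
  · have : bangRho α β γ = 0 := by rw [bangRho, ← hP, div_zero]
    rw [bangT, this]
    have := bangRho_le_one h1α (by linarith) h1β (by linarith) hδ0 hδ1
    linarith
  rcases eq_or_lt_of_le (bangP_nonneg h1α h1β hδ0 hδ1) with hQ | hQ
  · have : bangRho (1-α) (1-β) δ = 0 := by rw [bangRho, ← hQ, div_zero]
    rw [bangT, this]
    have := bangRho_le_one hα0 hα1 hβ0 hβ1 hγ0 hγ1
    linarith
  · have h1 : bangP α β γ ≠ 0 := ne_of_gt hP
    have h2 : bangP (1-α) (1-β) δ ≠ 0 := ne_of_gt hQ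
    have key : bangT α β γ δ = ((β - α) * bangF α β γ δ) / (bangP α β γ * bangP (1-α) (1-β) δ) := by
      rw [bangT, bangRho, bangRho, bangF]
      field_simp
      simp only [bangP]
      ring
    rw [key]
    exact div_nonneg hE (mul_pos hP hQ).le

lemma bangF_nonpos {α β γ δ : ℝ} (hα1 : α ≤ 1) (hβ0 : 0 ≤ β)
    (hγ0 : 0 ≤ γ) (hδ1 : δ ≤ 1) (hβα : β ≤ α) (hγδ : γ ≤ δ) (hα0 : 0 ≤ α) (hβ1 : β ≤ 1) :
    bangF α β γ δ ≤ 0 := by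
  rw [bangF]
  nlinarith [mul_le_mul_of_nonneg_right hβα (mul_nonneg hγ0 (by linarith : (0:ℝ) ≤ 1 - δ)),
    mul_le_mul_of_nonneg_right hβ1 (mul_nonneg hα0 (by linarith : (0:ℝ) ≤ δ - γ))]

lemma bangF_nonneg' {α β γ δ : ℝ} (hβ1 : β ≤ 1) (hα0 : 0 ≤ α)
    (hδ0 : 0 ≤ δ) (hγ1 : γ ≤ 1) (hαβ : α ≤ β) (hδγ : δ ≤ γ) (hβ0 : 0 ≤ β) (hα1 : α ≤ 1) :
    0 ≤ bangF α β γ δ := by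
  rw [bangF]
  nlinarith [mul_le_mul_of_nonneg_right hαβ (mul_nonneg hδ0 (by linarith : (0:ℝ) ≤ 1 - γ)),
    mul_le_mul_of_nonneg_right hα1 (mul_nonneg hβ0 (by linarith : (0:ℝ) ≤ γ - δ))]

lemma bangF_swap (α β γ δ : ℝ) : bangF γ δ α β = - bangF α β γ δ := by
  rw [bangF, bangF]; ring

lemma bang_disj {α β γ δ : ℝ} (hα0 : 0 ≤ α) (hα1 : α ≤ 1) (hβ0 : 0 ≤ β) (hβ1 : β ≤ 1)
    (hγ0 : 0 ≤ γ) (hγ1 : γ ≤ 1) (hδ0 : 0 ≤ δ) (hδ1 : δ ≤ 1) :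
    0 ≤ bangT α β γ δ ∨ 0 ≤ bangT γ δ α β := by
  rcases le_or_gt 0 ((β - α) * bangF α β γ δ) with hE | hE
  · exact Or.inl (bangT_nonneg hα0 hα1 hβ0 hβ1 hγ0 hγ1 hδ0 hδ1 hE)
  · right
    apply bangT_nonneg hγ0 hγ1 hδ0 hδ1 hα0 hα1 hβ0 hβ1
    rw [bangF_swap]
    rcases lt_trichotomy (bangF α β γ δ) 0 with hF | hF | hF
    · have hba : α < β := by nlinarith
      have : ¬ δ ≤ γ := fun hc => absurd (bangF_nonneg' hβ1 hα0 hδ0 hγ1 hba.le hc hβ0 hα1) (by linarith)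
      nlinarith
    · rw [hF] at hE; nlinarith
    · have hba : β < α := by nlinarith
      have : ¬ γ ≤ δ := fun hc => absurd (bangF_nonpos hα1 hβ0 hγ0 hδ1 hba.le hc hα0 hβ1) (by linarith)
      nlinarith


open MeasureTheory Set
open scoped ENNReal

lemma affine_preimage_Icc {u v C D : ℝ} (h : u < v) :
    {t : ℝ | u + t*(v-u) ∈ Icc C D} = Icc ((C-u)/(v-u)) ((D-u)/(v-u)) := by
  have hvu : 0 < v - u := by linarith
  ext t
  simp only [mem_setOf_eq, mem_Icc]
  constructor
  · rintro ⟨h1, h2⟩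
    exact ⟨(div_le_iff₀ hvu).2 (by linarith), (le_div_iff₀ hvu).2 (by linarith)⟩
  · rintro ⟨h1, h2⟩
    rw [div_le_iff₀ hvu] at h1
    rw [le_div_iff₀ hvu] at h2
    constructor <;> linarith

lemma affine_preimage_vol {u v : ℝ} (C D : ℝ) (h : u ≠ v) :
    volume {t : ℝ | u + t*(v-u) ∈ Icc C D}
      = ENNReal.ofReal ((D - C)/(max u v - min u v)) := by
  rcases h.lt_or_gt with h | h
  · rw [affine_preimage_Icc h, Real.volume_Icc, max_eq_right h.le, min_eq_left h.le]
    congr 1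
    rw [div_sub_div_same]
    ring_nf
  · have hvu : v - u < 0 := by linarith
    have : {t : ℝ | u + t*(v-u) ∈ Icc C D} = Icc ((D-u)/(v-u)) ((C-u)/(v-u)) := by
      ext t
      simp only [mem_setOf_eq, mem_Icc]
      constructor
      · rintro ⟨h1, h2⟩
        exact ⟨(div_le_iff_of_neg hvu).2 (by linarith), (le_div_iff_of_neg hvu).2 (by linarith)⟩
      · rintro ⟨h1, h2⟩
        rw [div_le_iff_of_neg hvu] at h1
        rw [le_div_iff_of_neg hvu] at h2
        constructor <;> linarith
    rw [this, Real.volume_Icc, max_eq_left h.le, min_eq_right h.le]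
    congr 1
    rw [div_sub_div_same]
    rw [show C - u - (D - u) = -(D - C) by ring, show u - v = -(v-u) by ring]
    rw [neg_div, div_neg]

lemma seg_plank_bound {W u v c d : ℝ} (hW : 0 ≤ W) (hdeg : u = v → W = 0) :
    ENNReal.ofReal W * volume {t : ℝ | t ∈ Icc (0:ℝ) 1 ∧ u + t*(v-u) ∈ Icc c d}
      ≤ ENNReal.ofReal (W/(max u v - min u v)) * volume (Icc c d ∩ Icc (min u v) (max u v)) := by
  rcases eq_or_ne u v with he | he
  · rw [hdeg he]; simp
  · set C := max c (min u v) with hC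
    set D := min d (max u v) with hD
    have hsub : {t : ℝ | t ∈ Icc (0:ℝ) 1 ∧ u + t*(v-u) ∈ Icc c d}
        ⊆ {t : ℝ | u + t*(v-u) ∈ Icc C D} := by
      rintro t ⟨⟨ht0, ht1⟩, hc', hd'⟩
      have h1 : min u v ≤ u + t*(v-u) := by
        rcases le_total u v with h | h
        · rw [min_eq_left h]; nlinarith
        · rw [min_eq_right h]; nlinarith
      have h2 : u + t*(v-u) ≤ max u v := by
        rcases le_total u v with h | h
        · rw [max_eq_right h]; nlinarith
        · rw [max_eq_left h]; nlinarith
      exact ⟨max_le hc' h1, le_min hd' h2⟩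
    have hminmax : min u v ≤ max u v := min_le_max
    calc ENNReal.ofReal W * volume {t : ℝ | t ∈ Icc (0:ℝ) 1 ∧ u + t*(v-u) ∈ Icc c d}
        ≤ ENNReal.ofReal W * volume {t : ℝ | u + t*(v-u) ∈ Icc C D} :=
          mul_le_mul_right (measure_mono hsub) _
      _ = ENNReal.ofReal W * ENNReal.ofReal ((D - C)/(max u v - min u v)) := by
          rw [affine_preimage_vol C D he]
      _ = ENNReal.ofReal (W/(max u v - min u v)) * ENNReal.ofReal (D - C) := by
          rw [← ENNReal.ofReal_mul hW, ← ENNReal.ofReal_mul (div_nonneg hW (by linarith [hminmax]))]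
          congr 1
          ring
      _ = ENNReal.ofReal (W/(max u v - min u v)) * volume (Icc c d ∩ Icc (min u v) (max u v)) := by
          rw [Set.Icc_inter_Icc, Real.volume_Icc]

lemma density_sum_bound (dens lo hi : Fin 5 → ℝ) (hdens : ∀ k, 0 ≤ dens k) {M c d : ℝ}
    (hM : 0 ≤ M) (E : Set ℝ) (hE : E.Finite)
    (hbound : ∀ x ∉ E,
      (∑ k, dens k * (Icc (lo k) (hi k)).indicator (fun _ => (1:ℝ)) x) ≤ M) :
    ∑ k, ENNReal.ofReal (dens k) * volume (Icc c d ∩ Icc (lo k) (hi k))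
      ≤ ENNReal.ofReal M * volume (Icc c d) := by
  have hvol : ∀ k : Fin 5, volume (Icc c d ∩ Icc (lo k) (hi k))
      = ∫⁻ x in Icc c d, (Icc (lo k) (hi k)).indicator (1 : ℝ → ℝ≥0∞) x := by
    intro k
    rw [lintegral_indicator_one measurableSet_Icc, Measure.restrict_apply measurableSet_Icc,
      Set.inter_comm]
  calc ∑ k, ENNReal.ofReal (dens k) * volume (Icc c d ∩ Icc (lo k) (hi k))
      = ∑ k, ∫⁻ x in Icc c d,
          ENNReal.ofReal (dens k) * (Icc (lo k) (hi k)).indicator (1 : ℝ → ℝ≥0∞) x := by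
        refine Finset.sum_congr rfl fun k _ => ?_
        rw [hvol k]
        exact (lintegral_const_mul _ (measurable_const.indicator measurableSet_Icc)).symm
    _ = ∫⁻ x in Icc c d, ∑ k,
          ENNReal.ofReal (dens k) * (Icc (lo k) (hi k)).indicator (1 : ℝ → ℝ≥0∞) x := by
        rw [lintegral_finset_sum]
        intro k _
        exact (measurable_const.indicator measurableSet_Icc).const_mul _
    _ ≤ ∫⁻ _ in Icc c d, ENNReal.ofReal M := by
        apply lintegral_mono_ae
        have hae : ∀ᵐ x ∂(volume : Measure ℝ), x ∉ E := by
          rw [MeasureTheory.ae_iff]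
          simpa using hE.measure_zero volume
        filter_upwards [ae_restrict_of_ae hae] with x hx
        have heq : ∀ k : Fin 5, ENNReal.ofReal (dens k)
            * (Icc (lo k) (hi k)).indicator (1 : ℝ → ℝ≥0∞) x
            = ENNReal.ofReal (dens k * (Icc (lo k) (hi k)).indicator (fun _ => (1:ℝ)) x) := by
          intro k
          by_cases hmem : x ∈ Icc (lo k) (hi k)
          · simp [Set.indicator_of_mem hmem]
          · simp [Set.indicator_of_notMem hmem]
        simp only [heq]
        rw [← ENNReal.ofReal_sum_of_nonneg (fun k _ =>
          mul_nonneg (hdens k) (Set.indicator_nonneg (fun _ _ => zero_le_one) x))]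
        exact ENNReal.ofReal_le_ofReal (hbound x hx)
    _ = ENNReal.ofReal M * volume (Icc c d) := by
        rw [MeasureTheory.setLIntegral_const]

lemma bang_xdensity {a b ah bh α β γ δ x : ℝ}
    (hab : a < b) (hαa : a ≤ ah) (hαb : ah ≤ b) (hβa : a ≤ bh) (hβb : bh ≤ b)
    (hα : α * (b - a) = ah - a) (hβ : β * (b - a) = bh - a)
    (hα0 : 0 ≤ α) (hα1 : α ≤ 1) (hβ0 : 0 ≤ β) (hβ1 : β ≤ 1)
    (hγ0 : 0 ≤ γ) (hγ1 : γ ≤ 1) (hδ0 : 0 ≤ δ) (hδ1 : δ ≤ 1)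
    (hx1 : x ≠ ah) (hx2 : x ≠ bh) :
    γ * bangRho α β γ / (ah - a) * (Icc a ah).indicator (fun _ => (1:ℝ)) x
    + (1-γ) * bangRho α β γ / (bh - a) * (Icc a bh).indicator (fun _ => (1:ℝ)) x
    + δ * bangRho (1-α) (1-β) δ / (b - ah) * (Icc ah b).indicator (fun _ => (1:ℝ)) x
    + (1-δ) * bangRho (1-α) (1-β) δ / (b - bh) * (Icc bh b).indicator (fun _ => (1:ℝ)) x
    + bangT α β γ δ / (max ah bh - min ah bh)
        * (Icc (min ah bh) (max ah bh)).indicator (fun _ => (1:ℝ)) x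
    ≤ 1 / (b - a) := by
  have hw : 0 < b - a := by linarith
  by_cases hxa : x < a
  · rw [Set.indicator_of_notMem (fun h => absurd h.1 (by linarith)),
      Set.indicator_of_notMem (fun h => absurd h.1 (by linarith)),
      Set.indicator_of_notMem (fun h => absurd h.1 (by linarith)),
      Set.indicator_of_notMem (fun h => absurd h.1 (by linarith)),
      Set.indicator_of_notMem (fun h => absurd h.1 (by
        rcases le_total ah bh with hh | hh
        · rw [min_eq_left hh]; linarith
        · rw [min_eq_right hh]; linarith))]
    simp only [mul_zero, add_zero, zero_add]
    positivity
  push_neg at hxa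
  by_cases hxb : b < x
  · rw [Set.indicator_of_notMem (fun h => absurd h.2 (by linarith)),
      Set.indicator_of_notMem (fun h => absurd h.2 (by linarith)),
      Set.indicator_of_notMem (fun h => absurd h.2 (by linarith)),
      Set.indicator_of_notMem (fun h => absurd h.2 (by linarith)),
      Set.indicator_of_notMem (fun h => absurd h.2 (by
        rcases le_total ah bh with hh | hh
        · rw [max_eq_right hh]; linarith
        · rw [max_eq_left hh]; linarith))]
    simp only [mul_zero, add_zero, zero_add]
    positivity
  push_neg at hxb
  rcases hx1.lt_or_gt with h1 | h1 <;> rcases hx2.lt_or_gt with h2 | h2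
  · -- x < ah, x < bh : region R1
    have hαpos : 0 < α := by nlinarith
    have hβpos : 0 < β := by nlinarith
    rw [Set.indicator_of_mem (Set.mem_Icc.mpr ⟨hxa, h1.le⟩),
      Set.indicator_of_mem (Set.mem_Icc.mpr ⟨hxa, h2.le⟩),
      Set.indicator_of_notMem (fun h => absurd h.1 (by linarith)),
      Set.indicator_of_notMem (fun h => absurd h.1 (by linarith)),
      Set.indicator_of_notMem (fun h => absurd h.1 (by
        rcases le_total ah bh with hh | hh
        · rw [min_eq_left hh]; linarith
        · rw [min_eq_right hh]; linarith))]
    simp only [mul_zero, add_zero, mul_one]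
    rw [← hα, ← hβ, ← div_div, ← div_div, ← add_div,
      bang_R1 hαpos hβpos hγ0 hγ1]
  · -- bh < x < ah : region R4 (mirror middle)
    have hβα : β < α := by nlinarith
    have hαpos : 0 < α := by nlinarith
    have hβ1' : β < 1 := by nlinarith
    rw [Set.indicator_of_mem (Set.mem_Icc.mpr ⟨hxa, h1.le⟩),
      Set.indicator_of_notMem (fun h => absurd h.2 (by linarith : ¬ x ≤ bh)),
      Set.indicator_of_notMem (fun h => absurd h.1 (by linarith : ¬ ah ≤ x)),
      Set.indicator_of_mem (Set.mem_Icc.mpr ⟨h2.le, hxb⟩),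
      min_eq_right (by linarith : bh ≤ ah), max_eq_left (by linarith : bh ≤ ah),
      Set.indicator_of_mem (Set.mem_Icc.mpr ⟨h2.le, h1.le⟩)]
    simp only [mul_zero, add_zero, zero_add, mul_one]
    have key := bang_R2 (by linarith : (0:ℝ) ≤ 1-α) (by linarith : (1:ℝ)-β ≤ 1)
      (by linarith : (1:ℝ)-α < 1-β) hδ0 hδ1 hγ0 hγ1
    rw [sub_sub_cancel, sub_sub_cancel] at key
    have hTmirror : bangT (1-α) (1-β) δ γ = bangT α β γ δ := by
      rw [bangT, bangT, sub_sub_cancel, sub_sub_cancel]; ring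
    rw [hTmirror, show (1:ℝ)-β-(1-α) = α - β by ring] at key
    have hspan0 : ah - a = α * (b - a) := hα.symm
    have hspan4 : b - bh = (1-β) * (b - a) := by linear_combination hβ
    have hspan5 : ah - bh = (α - β) * (b - a) := by linear_combination hβ - hα
    rw [hspan0, hspan4, hspan5, ← div_div, ← div_div, ← div_div,
      ← add_div, ← add_div]
    have heq : γ * bangRho α β γ / α + (1-δ) * bangRho (1-α) (1-β) δ / (1-β)
        + bangT α β γ δ / (α-β) = 1 := by linarith [key]
    rw [heq]
  · -- ah < x < bh : region R2 (middle)
    have hαβ : α < β := by nlinarith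
    have hβpos : 0 < β := by nlinarith
    have hα1' : α < 1 := by nlinarith
    rw [Set.indicator_of_notMem (fun h => absurd h.2 (by linarith : ¬ x ≤ ah)),
      Set.indicator_of_mem (Set.mem_Icc.mpr ⟨hxa, h2.le⟩),
      Set.indicator_of_mem (Set.mem_Icc.mpr ⟨h1.le, hxb⟩),
      Set.indicator_of_notMem (fun h => absurd h.1 (by linarith : ¬ bh ≤ x)),
      min_eq_left (by linarith : ah ≤ bh), max_eq_right (by linarith : ah ≤ bh),
      Set.indicator_of_mem (Set.mem_Icc.mpr ⟨h1.le, h2.le⟩)]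
    simp only [mul_zero, add_zero, zero_add, mul_one]
    have hspan1 : bh - a = β * (b - a) := hβ.symm
    have hspan2 : b - ah = (1-α) * (b - a) := by linear_combination hα
    have hspan3 : bh - ah = (β - α) * (b - a) := by linear_combination hα - hβ
    rw [hspan1, hspan2, hspan3, ← div_div, ← div_div, ← div_div,
      ← add_div, ← add_div,
      bang_R2 hα0 hβ1 hαβ hγ0 hγ1 hδ0 hδ1]
  · -- ah < x, bh < x : region R4'
    have hα1' : α < 1 := by nlinarith
    have hβ1' : β < 1 := by nlinarith
    rw [Set.indicator_of_notMem (fun h => absurd h.2 (by linarith : ¬ x ≤ ah)),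
      Set.indicator_of_notMem (fun h => absurd h.2 (by linarith : ¬ x ≤ bh)),
      Set.indicator_of_mem (Set.mem_Icc.mpr ⟨h1.le, hxb⟩),
      Set.indicator_of_mem (Set.mem_Icc.mpr ⟨h2.le, hxb⟩),
      Set.indicator_of_notMem (fun h => absurd h.2 (by
        rcases le_total ah bh with hh | hh
        · rw [max_eq_right hh]; linarith
        · rw [max_eq_left hh]; linarith))]
    simp only [mul_zero, add_zero, zero_add, mul_one]
    have hspan2 : b - ah = (1-α) * (b - a) := by linear_combination hα
    have hspan4 : b - bh = (1-β) * (b - a) := by linear_combination hβ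
    rw [hspan2, hspan4, ← div_div, ← div_div, ← add_div,
      bang_R1 (by linarith : (0:ℝ) < 1-α) (by linarith : (0:ℝ) < 1-β) hδ0 hδ1]

lemma bang_ydensity {a b gh dh α β γ δ x : ℝ}
    (hab : a < b) (hγa : a ≤ gh) (hγb : gh ≤ b) (hδa : a ≤ dh) (hδb : dh ≤ b)
    (hγ : γ * (b - a) = gh - a) (hδ : δ * (b - a) = dh - a)
    (hx1 : x ≠ gh) (hx2 : x ≠ dh) :
    γ * bangRho α β γ / (gh - a) * (Icc a gh).indicator (fun _ => (1:ℝ)) x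
    + (1-γ) * bangRho α β γ / (b - gh) * (Icc gh b).indicator (fun _ => (1:ℝ)) x
    + δ * bangRho (1-α) (1-β) δ / (dh - a) * (Icc a dh).indicator (fun _ => (1:ℝ)) x
    + (1-δ) * bangRho (1-α) (1-β) δ / (b - dh) * (Icc dh b).indicator (fun _ => (1:ℝ)) x
    + bangT α β γ δ / (b - a) * (Icc a b).indicator (fun _ => (1:ℝ)) x
    ≤ 1 / (b - a) := by
  have hw : 0 < b - a := by linarith
  set ρ := bangRho α β γ
  set ρ' := bangRho (1-α) (1-β) δ
  have hsum : ρ + ρ' + bangT α β γ δ = 1 := by rw [bangT]; ring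
  by_cases hxa : x < a
  · rw [Set.indicator_of_notMem (fun h => absurd h.1 (by linarith)),
      Set.indicator_of_notMem (fun h => absurd h.1 (by linarith)),
      Set.indicator_of_notMem (fun h => absurd h.1 (by linarith)),
      Set.indicator_of_notMem (fun h => absurd h.1 (by linarith)),
      Set.indicator_of_notMem (fun h => absurd h.1 (by linarith))]
    simp only [mul_zero, add_zero, zero_add]
    positivity
  push_neg at hxa
  by_cases hxb : b < x
  · rw [Set.indicator_of_notMem (fun h => absurd h.2 (by linarith)),
      Set.indicator_of_notMem (fun h => absurd h.2 (by linarith)),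
      Set.indicator_of_notMem (fun h => absurd h.2 (by linarith)),
      Set.indicator_of_notMem (fun h => absurd h.2 (by linarith)),
      Set.indicator_of_notMem (fun h => absurd h.2 (by linarith))]
    simp only [mul_zero, add_zero, zero_add]
    positivity
  push_neg at hxb
  rw [Set.indicator_of_mem (Set.mem_Icc.mpr ⟨hxa, hxb⟩)]
  have e1 : γ * ρ / (gh - a) * (Icc a gh).indicator (fun _ => (1:ℝ)) x
      + (1-γ) * ρ / (b - gh) * (Icc gh b).indicator (fun _ => (1:ℝ)) x = ρ / (b - a) := by
    rcases hx1.lt_or_gt with h | h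
    · have hγpos : 0 < γ := by nlinarith
      rw [Set.indicator_of_mem (Set.mem_Icc.mpr ⟨hxa, h.le⟩),
        Set.indicator_of_notMem (fun hm => absurd hm.1 (by linarith : ¬ gh ≤ x))]
      rw [← hγ, mul_div_mul_left _ _ (ne_of_gt hγpos)]
      ring
    · have hγ1 : γ < 1 := by nlinarith
      rw [Set.indicator_of_notMem (fun hm => absurd hm.2 (by linarith : ¬ x ≤ gh)),
        Set.indicator_of_mem (Set.mem_Icc.mpr ⟨h.le, hxb⟩)]
      rw [show b - gh = (1-γ) * (b-a) by linear_combination hγ,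
        mul_div_mul_left _ _ (by linarith : (1:ℝ)-γ ≠ 0)]
      ring
  have e2 : δ * ρ' / (dh - a) * (Icc a dh).indicator (fun _ => (1:ℝ)) x
      + (1-δ) * ρ' / (b - dh) * (Icc dh b).indicator (fun _ => (1:ℝ)) x = ρ' / (b - a) := by
    rcases hx2.lt_or_gt with h | h
    · have hδpos : 0 < δ := by nlinarith
      rw [Set.indicator_of_mem (Set.mem_Icc.mpr ⟨hxa, h.le⟩),
        Set.indicator_of_notMem (fun hm => absurd hm.1 (by linarith : ¬ dh ≤ x))]
      rw [← hδ, mul_div_mul_left _ _ (ne_of_gt hδpos)]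
      ring
    · have hδ1 : δ < 1 := by nlinarith
      rw [Set.indicator_of_notMem (fun hm => absurd hm.2 (by linarith : ¬ x ≤ dh)),
        Set.indicator_of_mem (Set.mem_Icc.mpr ⟨h.le, hxb⟩)]
      rw [show b - dh = (1-δ) * (b-a) by linear_combination hδ,
        mul_div_mul_left _ _ (by linarith : (1:ℝ)-δ ≠ 0)]
      ring
  calc γ * ρ / (gh - a) * (Icc a gh).indicator (fun _ => (1:ℝ)) x
      + (1-γ) * ρ / (b - gh) * (Icc gh b).indicator (fun _ => (1:ℝ)) x
      + δ * ρ' / (dh - a) * (Icc a dh).indicator (fun _ => (1:ℝ)) x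
      + (1-δ) * ρ' / (b - dh) * (Icc dh b).indicator (fun _ => (1:ℝ)) x
      + bangT α β γ δ / (b - a) * 1
      = (ρ / (b-a) + ρ' / (b-a)) + bangT α β γ δ / (b - a) := by
        rw [← e1, ← e2]; ring
    _ = (ρ + ρ' + bangT α β γ δ) / (b-a) := by ring
    _ = 1 / (b-a) := by rw [hsum]
    _ ≤ 1 / (b-a) := le_refl _

lemma lin_affine_eval {n : ℕ} (g : (Fin n → ℝ) →ₗ[ℝ] ℝ) (p q : Fin n → ℝ) (t : ℝ) :
    g (p + t • (q - p)) = g p + t * (g q - g p) := by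
  rw [map_add, _root_.map_smul, map_sub, smul_eq_mul]

lemma bangRho_zero_left (β γ : ℝ) : bangRho 0 β γ = 0 := by
  rw [bangRho, zero_mul, zero_div]

lemma bangRho_zero_right (α γ : ℝ) : bangRho α 0 γ = 0 := by
  rw [bangRho, mul_zero, zero_div]

lemma bangT_self {α γ δ : ℝ} (h0 : 0 ≤ α) (h1 : α ≤ 1) : bangT α α γ δ = 0 := by
  rw [bangT, bangRho_self h0, bangRho_self (by linarith : (0:ℝ) ≤ 1 - α)]
  ring


/-- The core lemma: given the four extremal points and the orientation condition `0 ≤ t`,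
the plank covering inequality follows. -/
lemma bang_core {n m : ℕ} (K : Set (Fin n → ℝ)) (hKconv : Convex ℝ K)
    (F G : (Fin n → ℝ) →ₗ[ℝ] ℝ)
    (pC pD pA pB : Fin n → ℝ) (hpC : pC ∈ K) (hpD : pD ∈ K) (hpA : pA ∈ K) (hpB : pB ∈ K)
    (hCmin : ∀ x ∈ K, F pC ≤ F x) (hDmax : ∀ x ∈ K, F x ≤ F pD)
    (hAmin : ∀ x ∈ K, G pA ≤ G x) (hBmax : ∀ x ∈ K, G x ≤ G pB)
    (hFw : F pC < F pD) (hGw : G pA < G pB)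
    (hinfF : sInf (⇑F '' K) = F pC) (hsupF : sSup (⇑F '' K) = F pD)
    (hinfG : sInf (⇑G '' K) = G pA) (hsupG : sSup (⇑G '' K) = G pB)
    (ht : 0 ≤ bangT ((F pA - F pC)/(F pD - F pC)) ((F pB - F pC)/(F pD - F pC))
      ((G pC - G pA)/(G pB - G pA)) ((G pD - G pA)/(G pB - G pA)))
    (g : Fin m → ((Fin n → ℝ) →ₗ[ℝ] ℝ)) (hgFG : ∀ i, g i = F ∨ g i = G)
    (c d : Fin m → ℝ) (hcd : ∀ i, c i ≤ d i)
    (hcover : K ⊆ ⋃ i, {x | c i ≤ g i x ∧ g i x ≤ d i}) :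
    1 ≤ ∑ i, (d i - c i) / (sSup (⇑(g i) '' K) - sInf (⇑(g i) '' K)) := by
  classical
  have hw0 : 0 < F pD - F pC := by linarith
  have hw1 : 0 < G pB - G pA := by linarith
  set α := (F pA - F pC)/(F pD - F pC) with hαdef
  set β := (F pB - F pC)/(F pD - F pC) with hβdef
  set γ := (G pC - G pA)/(G pB - G pA) with hγdef
  set δ := (G pD - G pA)/(G pB - G pA) with hδdef
  have hα0 : 0 ≤ α := div_nonneg (by linarith [hCmin pA hpA]) hw0.le
  have hα1 : α ≤ 1 := by rw [hαdef, div_le_one hw0]; linarith [hDmax pA hpA]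
  have hβ0 : 0 ≤ β := div_nonneg (by linarith [hCmin pB hpB]) hw0.le
  have hβ1 : β ≤ 1 := by rw [hβdef, div_le_one hw0]; linarith [hDmax pB hpB]
  have hγ0 : 0 ≤ γ := div_nonneg (by linarith [hAmin pC hpC]) hw1.le
  have hγ1 : γ ≤ 1 := by rw [hγdef, div_le_one hw1]; linarith [hBmax pC hpC]
  have hδ0 : 0 ≤ δ := div_nonneg (by linarith [hAmin pD hpD]) hw1.le
  have hδ1 : δ ≤ 1 := by rw [hδdef, div_le_one hw1]; linarith [hBmax pD hpD]
  have hαeq : α * (F pD - F pC) = F pA - F pC := div_mul_cancel₀ _ hw0.ne'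
  have hβeq : β * (F pD - F pC) = F pB - F pC := div_mul_cancel₀ _ hw0.ne'
  have hγeq : γ * (G pB - G pA) = G pC - G pA := div_mul_cancel₀ _ hw1.ne'
  have hδeq : δ * (G pB - G pA) = G pD - G pA := div_mul_cancel₀ _ hw1.ne'
  set ρ := bangRho α β γ with hρdef
  set ρ' := bangRho (1-α) (1-β) δ with hρ'def
  have hρ0 : 0 ≤ ρ := bangRho_nonneg hα0 hβ0 hγ0 hγ1
  have hρ'0 : 0 ≤ ρ' := bangRho_nonneg (by linarith) (by linarith) hδ0 hδ1
  set W : Fin 5 → ℝ := ![γ*ρ, (1-γ)*ρ, δ*ρ', (1-δ)*ρ', bangT α β γ δ] with hWdef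
  set Pt : Fin 5 → (Fin n → ℝ) := ![pC, pC, pA, pB, pA] with hPtdef
  set Qt : Fin 5 → (Fin n → ℝ) := ![pA, pB, pD, pD, pB] with hQtdef
  have hW0 : ∀ k, 0 ≤ W k := by
    intro k
    fin_cases k <;> simp [hWdef] <;>
      first
        | exact mul_nonneg hγ0 hρ0
        | exact mul_nonneg (by linarith) hρ0
        | exact mul_nonneg hδ0 hρ'0
        | exact mul_nonneg (by linarith) hρ'0
        | exact ht
  have hWsum : ∑ k, W k = 1 := by
    rw [Fin.sum_univ_five]
    simp only [hWdef, Matrix.cons_val_zero, Matrix.cons_val_one, Matrix.head_cons,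
      Matrix.cons_val_two, Matrix.tail_cons, Matrix.cons_val_three, Matrix.cons_val_four]
    rw [bangT]
    ring
  have hcov1 : ∀ k : Fin 5, (1:ℝ≥0∞) ≤ ∑ i, volume {t : ℝ | t ∈ Icc (0:ℝ) 1 ∧
      g i (Pt k) + t * (g i (Qt k) - g i (Pt k)) ∈ Icc (c i) (d i)} := by
    intro k
    have hPtK : Pt k ∈ K := by fin_cases k <;> simp [hPtdef] <;> assumption
    have hQtK : Qt k ∈ K := by fin_cases k <;> simp [hQtdef] <;> assumption
    have hsub : Icc (0:ℝ) 1 ⊆ ⋃ i, {t : ℝ | t ∈ Icc (0:ℝ) 1 ∧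
        g i (Pt k) + t * (g i (Qt k) - g i (Pt k)) ∈ Icc (c i) (d i)} := by
      intro t htt
      have ht01 := Set.mem_Icc.mp htt
      have hmemK : Pt k + t • (Qt k - Pt k) ∈ K := by
        have h2 : (1-t) • Pt k + t • Qt k ∈ K :=
          hKconv hPtK hQtK (by linarith [ht01.1]) (by linarith [ht01.2]) (by ring)
        have h3 : Pt k + t • (Qt k - Pt k) = (1-t) • Pt k + t • Qt k := by
          funext w
          simp only [Pi.add_apply, Pi.smul_apply, Pi.sub_apply, smul_eq_mul]
          ring
        rw [h3]; exact h2
      obtain ⟨U, ⟨i, rfl⟩, hU⟩ := hcover hmemK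
      refine mem_iUnion.mpr ⟨i, ⟨htt, ?_⟩⟩
      rw [← lin_affine_eval]
      exact Set.mem_Icc.mpr ⟨hU.1, hU.2⟩
    calc (1:ℝ≥0∞) = volume (Icc (0:ℝ) 1) := by rw [Real.volume_Icc]; norm_num
      _ ≤ volume (⋃ i, {t : ℝ | t ∈ Icc (0:ℝ) 1 ∧
            g i (Pt k) + t * (g i (Qt k) - g i (Pt k)) ∈ Icc (c i) (d i)}) :=
          measure_mono hsub
      _ ≤ ∑ i, volume {t : ℝ | t ∈ Icc (0:ℝ) 1 ∧
            g i (Pt k) + t * (g i (Qt k) - g i (Pt k)) ∈ Icc (c i) (d i)} :=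
          measure_iUnion_fintype_le _ _
  have perplank : ∀ i : Fin m,
      (∑ k, ENNReal.ofReal (W k) * volume {t : ℝ | t ∈ Icc (0:ℝ) 1 ∧
        g i (Pt k) + t * (g i (Qt k) - g i (Pt k)) ∈ Icc (c i) (d i)})
      ≤ ENNReal.ofReal ((d i - c i) / (sSup (⇑(g i) '' K) - sInf (⇑(g i) '' K))) := by
    intro i
    rcases hgFG i with hgi | hgi
    · -- direction F
      rw [hgi, hsupF, hinfF]
      have hdb := density_sum_bound
        ![γ*ρ/(F pA - F pC), (1-γ)*ρ/(F pB - F pC), δ*ρ'/(F pD - F pA),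
          (1-δ)*ρ'/(F pD - F pB), bangT α β γ δ/(max (F pA) (F pB) - min (F pA) (F pB))]
        ![F pC, F pC, F pA, F pB, min (F pA) (F pB)]
        ![F pA, F pB, F pD, F pD, max (F pA) (F pB)]
        (by
          intro k
          fin_cases k <;> simp only [Matrix.cons_val_zero, Matrix.cons_val_one,
            Matrix.head_cons, Matrix.cons_val_two, Matrix.tail_cons, Matrix.cons_val_three,
            Matrix.cons_val_four]
          · exact div_nonneg (mul_nonneg hγ0 hρ0) (by linarith [hCmin pA hpA])
          · exact div_nonneg (mul_nonneg (by linarith) hρ0) (by linarith [hCmin pB hpB])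
          · exact div_nonneg (mul_nonneg hδ0 hρ'0) (by linarith [hDmax pA hpA])
          · exact div_nonneg (mul_nonneg (by linarith) hρ'0) (by linarith [hDmax pB hpB])
          · exact div_nonneg ht (by linarith [min_le_max (a := F pA) (b := F pB)]))
        (by positivity : (0:ℝ) ≤ 1/(F pD - F pC))
        ({F pA, F pB} : Set ℝ) ((Set.finite_singleton (F pB)).insert (F pA))
        (by
          intro x hx
          simp only [Set.mem_insert_iff, Set.mem_singleton_iff, not_or] at hx
          rw [Fin.sum_univ_five]
          simp only [Matrix.cons_val_zero, Matrix.cons_val_one, Matrix.head_cons,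
            Matrix.cons_val_two, Matrix.tail_cons, Matrix.cons_val_three, Matrix.cons_val_four]
          rw [hρdef, hρ'def]
          exact bang_xdensity hFw (hCmin pA hpA) (hDmax pA hpA) (hCmin pB hpB) (hDmax pB hpB)
            hαeq hβeq hα0 hα1 hβ0 hβ1 hγ0 hγ1 hδ0 hδ1 hx.1 hx.2)
        (c := c i) (d := d i)
      have h1 := seg_plank_bound (W := γ*ρ) (u := F pC) (v := F pA) (c := c i) (d := d i)
        (mul_nonneg hγ0 hρ0)
        (fun h => by
          have hz : α = 0 := by rw [hαdef, ← h, sub_self, zero_div]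
          rw [hρdef, hz, bangRho_zero_left, mul_zero])
      rw [min_eq_left (hCmin pA hpA), max_eq_right (hCmin pA hpA)] at h1
      have h2 := seg_plank_bound (W := (1-γ)*ρ) (u := F pC) (v := F pB) (c := c i) (d := d i)
        (mul_nonneg (by linarith) hρ0)
        (fun h => by
          have hz : β = 0 := by rw [hβdef, ← h, sub_self, zero_div]
          rw [hρdef, hz, bangRho_zero_right, mul_zero])
      rw [min_eq_left (hCmin pB hpB), max_eq_right (hCmin pB hpB)] at h2
      have h3 := seg_plank_bound (W := δ*ρ') (u := F pA) (v := F pD) (c := c i) (d := d i)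
        (mul_nonneg hδ0 hρ'0)
        (fun h => by
          have hz : (1:ℝ) - α = 0 := by rw [hαdef, h, div_self hw0.ne', sub_self]
          rw [hρ'def, hz, bangRho_zero_left, mul_zero])
      rw [min_eq_left (hDmax pA hpA), max_eq_right (hDmax pA hpA)] at h3
      have h4 := seg_plank_bound (W := (1-δ)*ρ') (u := F pB) (v := F pD) (c := c i) (d := d i)
        (mul_nonneg (by linarith) hρ'0)
        (fun h => by
          have hz : (1:ℝ) - β = 0 := by rw [hβdef, h, div_self hw0.ne', sub_self]
          rw [hρ'def, hz, bangRho_zero_right, mul_zero])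
      rw [min_eq_left (hDmax pB hpB), max_eq_right (hDmax pB hpB)] at h4
      have h5 := seg_plank_bound (W := bangT α β γ δ) (u := F pA) (v := F pB)
        (c := c i) (d := d i) ht
        (fun h => by
          have hz : α = β := by rw [hαdef, hβdef, h]
          rw [hz, bangT_self hβ0 hβ1])
      have hfin : ENNReal.ofReal (1/(F pD - F pC)) * volume (Icc (c i) (d i))
          = ENNReal.ofReal ((d i - c i)/(F pD - F pC)) := by
        rw [Real.volume_Icc, ← ENNReal.ofReal_mul (by positivity)]
        congr 1
        ring
      rw [Fin.sum_univ_five] at hdb ⊢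
      simp only [hWdef, hPtdef, hQtdef, Matrix.cons_val_zero, Matrix.cons_val_one,
        Matrix.head_cons, Matrix.cons_val_two, Matrix.tail_cons, Matrix.cons_val_three,
        Matrix.cons_val_four] at hdb ⊢
      exact le_trans (add_le_add (add_le_add (add_le_add (add_le_add h1 h2) h3) h4) h5)
        (le_trans hdb (le_of_eq hfin))
    · -- direction G
      rw [hgi, hsupG, hinfG]
      have hdb := density_sum_bound
        ![γ*ρ/(G pC - G pA), (1-γ)*ρ/(G pB - G pC), δ*ρ'/(G pD - G pA),
          (1-δ)*ρ'/(G pB - G pD), bangT α β γ δ/(G pB - G pA)]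
        ![G pA, G pC, G pA, G pD, G pA]
        ![G pC, G pB, G pD, G pB, G pB]
        (by
          intro k
          fin_cases k <;> simp only [Matrix.cons_val_zero, Matrix.cons_val_one,
            Matrix.head_cons, Matrix.cons_val_two, Matrix.tail_cons, Matrix.cons_val_three,
            Matrix.cons_val_four]
          · exact div_nonneg (mul_nonneg hγ0 hρ0) (by linarith [hAmin pC hpC])
          · exact div_nonneg (mul_nonneg (by linarith) hρ0) (by linarith [hBmax pC hpC])
          · exact div_nonneg (mul_nonneg hδ0 hρ'0) (by linarith [hAmin pD hpD])
          · exact div_nonneg (mul_nonneg (by linarith) hρ'0) (by linarith [hBmax pD hpD])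
          · exact div_nonneg ht (by linarith))
        (by positivity : (0:ℝ) ≤ 1/(G pB - G pA))
        ({G pC, G pD} : Set ℝ) ((Set.finite_singleton (G pD)).insert (G pC))
        (by
          intro x hx
          simp only [Set.mem_insert_iff, Set.mem_singleton_iff, not_or] at hx
          rw [Fin.sum_univ_five]
          simp only [Matrix.cons_val_zero, Matrix.cons_val_one, Matrix.head_cons,
            Matrix.cons_val_two, Matrix.tail_cons, Matrix.cons_val_three, Matrix.cons_val_four]
          rw [hρdef, hρ'def]
          exact bang_ydensity hGw (hAmin pC hpC) (hBmax pC hpC) (hAmin pD hpD) (hBmax pD hpD)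
            hγeq hδeq hx.1 hx.2)
        (c := c i) (d := d i)
      have h1 := seg_plank_bound (W := γ*ρ) (u := G pC) (v := G pA) (c := c i) (d := d i)
        (mul_nonneg hγ0 hρ0)
        (fun h => by
          have hz : γ = 0 := by rw [hγdef, h, sub_self, zero_div]
          rw [hz, zero_mul])
      rw [min_eq_right (hAmin pC hpC), max_eq_left (hAmin pC hpC)] at h1
      have h2 := seg_plank_bound (W := (1-γ)*ρ) (u := G pC) (v := G pB) (c := c i) (d := d i)
        (mul_nonneg (by linarith) hρ0)
        (fun h => by
          have hz : γ = 1 := by rw [hγdef, h, div_self hw1.ne']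
          rw [hz, sub_self, zero_mul])
      rw [min_eq_left (hBmax pC hpC), max_eq_right (hBmax pC hpC)] at h2
      have h3 := seg_plank_bound (W := δ*ρ') (u := G pA) (v := G pD) (c := c i) (d := d i)
        (mul_nonneg hδ0 hρ'0)
        (fun h => by
          have hz : δ = 0 := by rw [hδdef, ← h, sub_self, zero_div]
          rw [hz, zero_mul])
      rw [min_eq_left (hAmin pD hpD), max_eq_right (hAmin pD hpD)] at h3
      have h4 := seg_plank_bound (W := (1-δ)*ρ') (u := G pB) (v := G pD) (c := c i) (d := d i)
        (mul_nonneg (by linarith) hρ'0)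
        (fun h => by
          have hz : δ = 1 := by rw [hδdef, ← h, div_self hw1.ne']
          rw [hz, sub_self, zero_mul])
      rw [min_eq_right (hBmax pD hpD), max_eq_left (hBmax pD hpD)] at h4
      have h5 := seg_plank_bound (W := bangT α β γ δ) (u := G pA) (v := G pB)
        (c := c i) (d := d i) ht (fun h => absurd h hGw.ne)
      rw [min_eq_left hGw.le, max_eq_right hGw.le] at h5
      have hfin : ENNReal.ofReal (1/(G pB - G pA)) * volume (Icc (c i) (d i))
          = ENNReal.ofReal ((d i - c i)/(G pB - G pA)) := by
        rw [Real.volume_Icc, ← ENNReal.ofReal_mul (by positivity)]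
        congr 1
        ring
      rw [Fin.sum_univ_five] at hdb ⊢
      simp only [hWdef, hPtdef, hQtdef, Matrix.cons_val_zero, Matrix.cons_val_one,
        Matrix.head_cons, Matrix.cons_val_two, Matrix.tail_cons, Matrix.cons_val_three,
        Matrix.cons_val_four] at hdb ⊢
      exact le_trans (add_le_add (add_le_add (add_le_add (add_le_add h1 h2) h3) h4) h5)
        (le_trans hdb (le_of_eq hfin))
  -- final assembly
  have hwidth0 : ∀ i, 0 ≤ (d i - c i) / (sSup (⇑(g i) '' K) - sInf (⇑(g i) '' K)) := by
    intro i
    rcases hgFG i with hgi | hgi <;> rw [hgi]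
    · rw [hsupF, hinfF]; exact div_nonneg (by linarith [hcd i]) hw0.le
    · rw [hsupG, hinfG]; exact div_nonneg (by linarith [hcd i]) hw1.le
  have hchain : (1:ℝ≥0∞) ≤ ENNReal.ofReal
      (∑ i, (d i - c i) / (sSup (⇑(g i) '' K) - sInf (⇑(g i) '' K))) := by
    calc (1:ℝ≥0∞) = ∑ k, ENNReal.ofReal (W k) * 1 := by
          simp only [mul_one]
          rw [← ENNReal.ofReal_sum_of_nonneg (fun k _ => hW0 k), hWsum, ENNReal.ofReal_one]
      _ ≤ ∑ k, ENNReal.ofReal (W k) * ∑ i, volume {t : ℝ | t ∈ Icc (0:ℝ) 1 ∧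
            g i (Pt k) + t * (g i (Qt k) - g i (Pt k)) ∈ Icc (c i) (d i)} := by
          apply Finset.sum_le_sum
          intro k _
          exact mul_le_mul_right (hcov1 k) _
      _ = ∑ i, ∑ k, ENNReal.ofReal (W k) * volume {t : ℝ | t ∈ Icc (0:ℝ) 1 ∧
            g i (Pt k) + t * (g i (Qt k) - g i (Pt k)) ∈ Icc (c i) (d i)} := by
          rw [Finset.sum_comm]
          exact Finset.sum_congr rfl fun k _ => Finset.mul_sum _ _ _
      _ ≤ ∑ i, ENNReal.ofReal ((d i - c i) / (sSup (⇑(g i) '' K) - sInf (⇑(g i) '' K))) :=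
          Finset.sum_le_sum fun i _ => perplank i
      _ = ENNReal.ofReal (∑ i, (d i - c i) / (sSup (⇑(g i) '' K) - sInf (⇑(g i) '' K))) :=
          (ENNReal.ofReal_sum_of_nonneg fun i _ => hwidth0 i).symm
  exact ENNReal.one_le_ofReal.mp hchain

lemma exists_lt_of_interior {n : ℕ} {K : Set (Fin n → ℝ)} (hKint : (interior K).Nonempty)
    (f : (Fin n → ℝ) →ₗ[ℝ] ℝ) (hf : f ≠ 0) : ∃ x ∈ K, ∃ y ∈ K, f x < f y := by
  obtain ⟨x₀, hx₀⟩ := hKint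
  obtain ⟨v, hv⟩ : ∃ v, f v ≠ 0 := by
    by_contra h
    push_neg at h
    exact hf (LinearMap.ext fun x => by simpa using h x)
  have hvpos : 0 < ‖v‖ := norm_pos_iff.mpr (fun hv0 => hv (by rw [hv0, map_zero]))
  obtain ⟨ε, hε, hball⟩ := Metric.mem_nhds_iff.mp (isOpen_interior.mem_nhds hx₀)
  set cc := ε/(2*‖v‖) with hccdef
  have hcc : 0 < cc := by positivity
  have hccv : cc * ‖v‖ = ε/2 := by
    rw [hccdef]
    field_simp
  have hx₁ : x₀ + cc • v ∈ K := by
    apply interior_subset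
    apply hball
    rw [Metric.mem_ball, dist_eq_norm, add_sub_cancel_left, norm_smul, Real.norm_eq_abs,
      abs_of_pos hcc, hccv]
    linarith
  have hval : f (x₀ + cc • v) = f x₀ + cc * f v := by
    rw [map_add, _root_.map_smul, smul_eq_mul]
  rcases hv.lt_or_gt with hneg | hpos
  · exact ⟨x₀ + cc • v, hx₁, x₀, interior_subset hx₀, by rw [hval]; nlinarith⟩
  · exact ⟨x₀, interior_subset hx₀, x₀ + cc • v, hx₁, by rw [hval]; nlinarith⟩

/-- The Bang conjecture for planks whose normals have only two distinct
directions: if a convex body `K ⊆ ℝⁿ` is covered by planks `P i = {x : c i ≤ f (j i) x ≤ d i}`,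
where `f 0, f 1` are two nonzero linear functionals, then the sum of the relative widths
`(d i − c i)/(max_{x∈K} f (j i) x − min_{x∈K} f (j i) x)` is at least `1`. -/
theorem bang_two_directions
    {n : ℕ} (K : Set (Fin n → ℝ)) (hK : IsCompact K) (hKconv : Convex ℝ K)
    (hKint : (interior K).Nonempty)
    (f : Fin 2 → ((Fin n → ℝ) →ₗ[ℝ] ℝ)) (hf : ∀ k, f k ≠ 0)
    (m : ℕ) (j : Fin m → Fin 2) (c d : Fin m → ℝ) (hcd : ∀ i, c i ≤ d i)
    (hcover : K ⊆ ⋃ i, {x | c i ≤ f (j i) x ∧ f (j i) x ≤ d i}) :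
    1 ≤ ∑ i, (d i - c i) / (sSup (⇑(f (j i)) '' K) - sInf (⇑(f (j i)) '' K)) := by
  have hne : K.Nonempty := ⟨hKint.choose, interior_subset hKint.choose_spec⟩
  have hcont : ∀ k : Fin 2, Continuous ⇑(f k) := fun k =>
    (f k).continuous_of_finiteDimensional
  obtain ⟨pC, hpC, hpCmin⟩ := hK.exists_isMinOn hne (hcont 0).continuousOn
  obtain ⟨pD, hpD, hpDmax⟩ := hK.exists_isMaxOn hne (hcont 0).continuousOn
  obtain ⟨pA, hpA, hpAmin⟩ := hK.exists_isMinOn hne (hcont 1).continuousOn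
  obtain ⟨pB, hpB, hpBmax⟩ := hK.exists_isMaxOn hne (hcont 1).continuousOn
  have hCmin : ∀ x ∈ K, f 0 pC ≤ f 0 x := fun x hx => hpCmin hx
  have hDmax : ∀ x ∈ K, f 0 x ≤ f 0 pD := fun x hx => hpDmax hx
  have hAmin : ∀ x ∈ K, f 1 pA ≤ f 1 x := fun x hx => hpAmin hx
  have hBmax : ∀ x ∈ K, f 1 x ≤ f 1 pB := fun x hx => hpBmax hx
  have h0w : f 0 pC < f 0 pD := by
    obtain ⟨x, hx, y, hy, hxy⟩ := exists_lt_of_interior hKint (f 0) (hf 0)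
    exact lt_of_le_of_lt (hCmin x hx) (lt_of_lt_of_le hxy (hDmax y hy))
  have h1w : f 1 pA < f 1 pB := by
    obtain ⟨x, hx, y, hy, hxy⟩ := exists_lt_of_interior hKint (f 1) (hf 1)
    exact lt_of_le_of_lt (hAmin x hx) (lt_of_lt_of_le hxy (hBmax y hy))
  have hinf0 : sInf (⇑(f 0) '' K) = f 0 pC :=
    IsLeast.csInf_eq ⟨⟨pC, hpC, rfl⟩, by rintro y ⟨x, hx, rfl⟩; exact hCmin x hx⟩
  have hsup0 : sSup (⇑(f 0) '' K) = f 0 pD :=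
    IsGreatest.csSup_eq ⟨⟨pD, hpD, rfl⟩, by rintro y ⟨x, hx, rfl⟩; exact hDmax x hx⟩
  have hinf1 : sInf (⇑(f 1) '' K) = f 1 pA :=
    IsLeast.csInf_eq ⟨⟨pA, hpA, rfl⟩, by rintro y ⟨x, hx, rfl⟩; exact hAmin x hx⟩
  have hsup1 : sSup (⇑(f 1) '' K) = f 1 pB :=
    IsGreatest.csSup_eq ⟨⟨pB, hpB, rfl⟩, by rintro y ⟨x, hx, rfl⟩; exact hBmax x hx⟩
  have hw0 : 0 < f 0 pD - f 0 pC := by linarith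
  have hw1 : 0 < f 1 pB - f 1 pA := by linarith
  set α := (f 0 pA - f 0 pC)/(f 0 pD - f 0 pC) with hαdef
  set β := (f 0 pB - f 0 pC)/(f 0 pD - f 0 pC) with hβdef
  set γ := (f 1 pC - f 1 pA)/(f 1 pB - f 1 pA) with hγdef
  set δ := (f 1 pD - f 1 pA)/(f 1 pB - f 1 pA) with hδdef
  have hα0 : 0 ≤ α := div_nonneg (by linarith [hCmin pA hpA]) hw0.le
  have hα1 : α ≤ 1 := by rw [hαdef, div_le_one hw0]; linarith [hDmax pA hpA]
  have hβ0 : 0 ≤ β := div_nonneg (by linarith [hCmin pB hpB]) hw0.le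
  have hβ1 : β ≤ 1 := by rw [hβdef, div_le_one hw0]; linarith [hDmax pB hpB]
  have hγ0 : 0 ≤ γ := div_nonneg (by linarith [hAmin pC hpC]) hw1.le
  have hγ1 : γ ≤ 1 := by rw [hγdef, div_le_one hw1]; linarith [hBmax pC hpC]
  have hδ0 : 0 ≤ δ := div_nonneg (by linarith [hAmin pD hpD]) hw1.le
  have hδ1 : δ ≤ 1 := by rw [hδdef, div_le_one hw1]; linarith [hBmax pD hpD]
  have hj01 : ∀ kk : Fin 2, kk = 0 ∨ kk = 1 := by decide
  rcases bang_disj hα0 hα1 hβ0 hβ1 hγ0 hγ1 hδ0 hδ1 with htc | htc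
  · exact bang_core K hKconv (f 0) (f 1) pC pD pA pB hpC hpD hpA hpB hCmin hDmax hAmin hBmax
      h0w h1w hinf0 hsup0 hinf1 hsup1 htc (fun i => f (j i))
      (fun i => by
        rcases hj01 (j i) with h | h
        · exact Or.inl (by show f (j i) = f 0; rw [h])
        · exact Or.inr (by show f (j i) = f 1; rw [h]))
      c d hcd hcover
  · exact bang_core K hKconv (f 1) (f 0) pA pB pC pD hpA hpB hpC hpD hAmin hBmax hCmin hDmax
      h1w h0w hinf1 hsup1 hinf0 hsup0 htc (fun i => f (j i))
      (fun i => by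
        rcases hj01 (j i) with h | h
        · exact Or.inr (by show f (j i) = f 0; rw [h])
        · exact Or.inl (by show f (j i) = f 1; rw [h]))
      c d hcd hcover
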